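/- Let n ≥ 3 and F_e ⊆ E(BS_n) with |F_e| ≤ 4n − 9. If BS_n − F_e is disconnected, then BS_n − F_e has exactly two connected components, one of which is an isolated vertex. -/

import Mathlib

open SimpleGraph

/-- Adjacency relation of the bubble-sort star graph: `y` is obtained from `x` by
swapping the symbols at positions `i` and `j` (0-indexed), where either `j = i+1`
(an adjacent transposition, i.e. positions `k-1, k` for `k ∈ [2,n]`) or `i = 0`
(a star transposition, i.e. positions `1, k` for `k ∈ [2,n]`). -/
def BSRel (n : ℕ) (x y : Equiv.Perm (Fin n)) : Prop :=
  ∃ i j : Fin n, (j.val = i.val + 1 ∨ i.val = 0) ∧ i ≠ j ∧ y = x * Equiv.swap i j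

/-- The n-dimensional bubble-sort star graph `BS_n` on the permutations of `{1,…,n}`. -/
def BS (n : ℕ) : SimpleGraph (Equiv.Perm (Fin n)) :=
  SimpleGraph.fromRel (BSRel n)

/-- The degree of a vertex, as the cardinality of its neighbour set. -/
noncomputable def deg {V : Type*} (G : SimpleGraph V) (v : V) : ℕ :=
  (G.neighborSet v).ncard

/-- `G` contains `m` pairwise edge-disjoint paths joining `u` and `v`. -/
def HasEdgeDisjointPaths {V : Type*} (G : SimpleGraph V) (u v : V) (m : ℕ) : Prop :=
  ∃ P : Fin m → G.Path u v, ∀ i j : Fin m, i ≠ j →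
    List.Disjoint ((P i : G.Walk u v).edges) ((P j : G.Walk u v).edges)

/-- For `n ≥ 3`, if at most `4n - 9` edges are deleted from `BS_n` and the result is
disconnected, then it has exactly two components, one of which is an isolated vertex. -/
instance decBSRel (n : ℕ) : DecidableRel (BSRel n) := fun x y => by
  unfold BSRel; infer_instance

instance decBSAdj (n : ℕ) : DecidableRel (BS n).Adj := fun x y =>
  decidable_of_iff' _ (SimpleGraph.fromRel_adj (BSRel n) x y)

def cutP (n : ℕ) (S : Finset (Equiv.Perm (Fin n))) :
    Finset (Equiv.Perm (Fin n) × Equiv.Perm (Fin n)) :=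
  Finset.univ.filter fun p => (BS n).Adj p.1 p.2 ∧ p.1 ∈ S ∧ p.2 ∉ S

set_option maxRecDepth 10000 in
lemma lam3 : ∀ S : Finset (Equiv.Perm (Fin 3)), S.Nonempty → S ≠ Finset.univ →
    3 ≤ (cutP 3 S).card := by decide

set_option maxRecDepth 10000 in
lemma star3 : ∀ S : Finset (Equiv.Perm (Fin 3)), 2 ≤ S.card →
    S.card + 2 ≤ Fintype.card (Equiv.Perm (Fin 3)) → 4 ≤ (cutP 3 S).card := by decide

lemma bs_adj' {n : ℕ} {x y : Equiv.Perm (Fin n)} : (BS n).Adj x y ↔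
    ∃ i j : Fin n, (j.val = i.val + 1 ∨ i.val = 0) ∧ i ≠ j ∧ y = x * Equiv.swap i j := by
  rw [BS, SimpleGraph.fromRel_adj]
  constructor
  · rintro ⟨hne, h | h⟩
    · exact h
    · rcases h with ⟨i, j, hc, hij, hx⟩
      exact ⟨i, j, hc, hij, by rw [hx, mul_assoc, Equiv.swap_mul_self, mul_one]⟩
  · rintro ⟨i, j, hc, hij, rfl⟩
    refine ⟨fun h => hij ?_, Or.inl ⟨i, j, hc, hij, rfl⟩⟩
    have := congrArg (fun z => z i) h
    simp only [Equiv.Perm.mul_apply, Equiv.swap_apply_left] at this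
    exact x.injective this

section Cluster
variable {n : ℕ}

/-- cluster of a vertex: value at the last position -/
def cl (x : Equiv.Perm (Fin (n+1))) : Fin (n+1) := x (Fin.last n)

def pm1 (n : ℕ) : Fin (n+1) := ⟨n-1, by omega⟩

def g1 (n : ℕ) : Equiv.Perm (Fin (n+1)) := Equiv.swap (pm1 n) (Fin.last n)
def g2 (n : ℕ) : Equiv.Perm (Fin (n+1)) := Equiv.swap 0 (Fin.last n)

variable (hn : 1 ≤ n)

lemma pm1_ne_last (hn : 1 ≤ n) : pm1 n ≠ Fin.last n := by
  simp only [pm1, Fin.ne_iff_vne, Fin.val_last]; omega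

lemma zero_ne_last (hn : 1 ≤ n) : (0 : Fin (n+1)) ≠ Fin.last n := by
  simp only [Fin.ne_iff_vne, Fin.val_last, Fin.val_zero]; omega

lemma pm1_ne_zero (hn : 2 ≤ n) : pm1 n ≠ 0 := by
  simp only [pm1, Fin.ne_iff_vne, Fin.val_zero]; omega

lemma adj_g1 (hn : 1 ≤ n) (x : Equiv.Perm (Fin (n+1))) : (BS (n+1)).Adj x (x * g1 n) := by
  refine bs_adj'.2 ⟨pm1 n, Fin.last n, Or.inl ?_, pm1_ne_last hn, rfl⟩
  simp only [pm1, Fin.val_last]; omega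

lemma adj_g2 (hn : 1 ≤ n) (x : Equiv.Perm (Fin (n+1))) : (BS (n+1)).Adj x (x * g2 n) := by
  exact bs_adj'.2 ⟨0, Fin.last n, Or.inr rfl, zero_ne_last hn, rfl⟩

lemma cl_mul_g1 (x : Equiv.Perm (Fin (n+1))) : cl (x * g1 n) = x (pm1 n) := by
  simp [cl, g1, Equiv.Perm.mul_apply, Equiv.swap_apply_right]

lemma cl_mul_g2 (x : Equiv.Perm (Fin (n+1))) : cl (x * g2 n) = x 0 := by
  simp [cl, g2, Equiv.Perm.mul_apply, Equiv.swap_apply_right]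

lemma cl_mul_g1_ne (hn : 1 ≤ n) (x : Equiv.Perm (Fin (n+1))) : cl (x * g1 n) ≠ cl x := by
  rw [cl_mul_g1]; exact fun h => pm1_ne_last hn (x.injective h)

lemma cl_mul_g2_ne (hn : 1 ≤ n) (x : Equiv.Perm (Fin (n+1))) : cl (x * g2 n) ≠ cl x := by
  rw [cl_mul_g2]; exact fun h => zero_ne_last hn (x.injective h)

lemma cl_mul_g1_ne_g2 (hn : 2 ≤ n) (x : Equiv.Perm (Fin (n+1))) :
    cl (x * g1 n) ≠ cl (x * g2 n) := by
  rw [cl_mul_g1, cl_mul_g2]; exact fun h => pm1_ne_zero hn (x.injective h)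

lemma g1_ne_g2 (hn : 2 ≤ n) (x : Equiv.Perm (Fin (n+1))) : x * g1 n ≠ x * g2 n := by
  intro h
  exact cl_mul_g1_ne_g2 hn x (by rw [h])

lemma adj_cross_cases (hn : 1 ≤ n) {x y : Equiv.Perm (Fin (n+1))}
    (h : (BS (n+1)).Adj x y) : cl y = cl x ∨ y = x * g1 n ∨ y = x * g2 n := by
  rcases bs_adj'.1 h with ⟨i, j, hc, hij, rfl⟩
  by_cases hj : j = Fin.last n
  · subst hj
    rcases hc with hc | hc
    · right; left
      have : i = pm1 n := by
        simp only [Fin.val_last] at hc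
        exact Fin.ext (by simp only [pm1]; omega)
      rw [this]; rfl
    · right; right
      have : i = (0 : Fin (n+1)) := Fin.ext (by simpa using hc)
      rw [this]; rfl
  · left
    have hi : i ≠ Fin.last n := by
      intro hi; subst hi
      rcases hc with hc | hc
      · have := j.isLt; simp only [Fin.val_last] at hc; omega
      · simp only [Fin.val_last] at hc; omega
    show (x * Equiv.swap i j) (Fin.last n) = x (Fin.last n)
    rw [Equiv.Perm.mul_apply, Equiv.swap_apply_of_ne_of_ne (Ne.symm hi) (Ne.symm hj)]
end Cluster

section Embed
variable {n : ℕ}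

noncomputable def E : Equiv.Perm (Fin n) →* Equiv.Perm (Fin (n+1)) :=
  Equiv.Perm.viaEmbeddingHom (Fin.castSuccEmb)

lemma E_apply (σ : Equiv.Perm (Fin n)) (i : Fin n) :
    E σ (Fin.castSucc i) = Fin.castSucc (σ i) :=
  Equiv.Perm.viaEmbedding_apply σ Fin.castSuccEmb i

lemma last_not_range : (Fin.last n) ∉ Set.range (⇑(Fin.castSuccEmb (n := n))) := by
  intro ⟨i, hi⟩
  exact absurd (congrArg Fin.val hi) (by simp [Fin.castSuccEmb]; omega)

lemma E_last (σ : Equiv.Perm (Fin n)) : E σ (Fin.last n) = Fin.last n :=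
  Equiv.Perm.viaEmbedding_apply_of_notMem σ Fin.castSuccEmb _ last_not_range

lemma E_inj : Function.Injective (E (n := n)) :=
  Equiv.Perm.viaEmbeddingHom_injective Fin.castSuccEmb

lemma E_swap (i j : Fin n) : E (Equiv.swap i j) = Equiv.swap i.castSucc j.castSucc := by
  ext k
  induction k using Fin.lastCases with
  | last =>
    rw [E_last, Equiv.swap_apply_of_ne_of_ne (Fin.castSucc_lt_last i).ne'
      (Fin.castSucc_lt_last j).ne']
  | cast k =>
    rw [E_apply]
    rcases eq_or_ne k i with rfl | hki
    · simp [Equiv.swap_apply_left]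
    · rcases eq_or_ne k j with rfl | hkj
      · simp [Equiv.swap_apply_right]
      · rw [Equiv.swap_apply_of_ne_of_ne hki hkj,
          Equiv.swap_apply_of_ne_of_ne (fun h => hki (Fin.castSucc_injective _ h))
            (fun h => hkj (Fin.castSucc_injective _ h))]

lemma E_surj_stab {x : Equiv.Perm (Fin (n+1))} (hx : x (Fin.last n) = Fin.last n) :
    ∃ σ : Equiv.Perm (Fin n), E σ = x := by
  have hne : ∀ i : Fin n, x i.castSucc ≠ Fin.last n := by
    intro i h
    exact (Fin.castSucc_lt_last i).ne (x.injective (h.trans hx.symm))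
  have hne' : ∀ i : Fin n, x⁻¹ i.castSucc ≠ Fin.last n := by
    intro i h
    have h2 := congrArg x h
    rw [← Equiv.Perm.mul_apply, mul_inv_cancel, Equiv.Perm.one_apply, hx] at h2
    exact (Fin.castSucc_lt_last i).ne h2
  refine ⟨⟨fun i => (x i.castSucc).castPred (hne i),
          fun i => (x⁻¹ i.castSucc).castPred (hne' i), ?_, ?_⟩, ?_⟩
  · intro i
    apply Fin.castSucc_injective
    simp [Fin.castSucc_castPred]
  · intro i
    apply Fin.castSucc_injective
    simp [Fin.castSucc_castPred]
  · ext k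
    induction k using Fin.lastCases with
    | last => rw [E_last, hx]
    | cast k =>
      rw [E_apply]
      simp [Fin.castSucc_castPred]

noncomputable def beta (a : Fin (n+1)) (σ : Equiv.Perm (Fin n)) : Equiv.Perm (Fin (n+1)) :=
  Equiv.swap (Fin.last n) a * E σ

lemma cl_beta (a : Fin (n+1)) (σ : Equiv.Perm (Fin n)) : cl (beta a σ) = a := by
  simp [cl, beta, Equiv.Perm.mul_apply, E_last, Equiv.swap_apply_left]

lemma beta_inj (a : Fin (n+1)) : Function.Injective (beta (n := n) a) := by
  intro σ τ h
  exact E_inj (mul_left_cancel h)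

lemma beta_surj {a : Fin (n+1)} {x : Equiv.Perm (Fin (n+1))} (hx : cl x = a) :
    ∃ σ, beta a σ = x := by
  have : (Equiv.swap (Fin.last n) a * x) (Fin.last n) = Fin.last n := by
    rw [Equiv.Perm.mul_apply]
    show Equiv.swap (Fin.last n) a (x (Fin.last n)) = _
    rw [show x (Fin.last n) = a from hx, Equiv.swap_apply_right]
  obtain ⟨σ, hσ⟩ := E_surj_stab this
  refine ⟨σ, ?_⟩
  rw [beta, hσ, ← mul_assoc, Equiv.swap_mul_self, one_mul]

lemma beta_adj {a : Fin (n+1)} {σ τ : Equiv.Perm (Fin n)} (h : (BS n).Adj σ τ) :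
    (BS (n+1)).Adj (beta a σ) (beta a τ) := by
  rcases bs_adj'.1 h with ⟨i, j, hc, hij, rfl⟩
  refine bs_adj'.2 ⟨i.castSucc, j.castSucc, ?_, fun h' => hij (Fin.castSucc_injective _ h'), ?_⟩
  · rcases hc with hc | hc
    · exact Or.inl (by simpa using hc)
    · exact Or.inr (by simpa using hc)
  · rw [beta, beta, map_mul, E_swap, mul_assoc]
end Embed

section Counting
variable {n : ℕ}

lemma mem_cutP {n : ℕ} {S : Finset (Equiv.Perm (Fin n))} {p} :
    p ∈ cutP n S ↔ (BS n).Adj p.1 p.2 ∧ p.1 ∈ S ∧ p.2 ∉ S := by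
  simp [cutP]

/-- the cluster with value `a` -/
def Hcl (a : Fin (n+1)) : Finset (Equiv.Perm (Fin (n+1))) :=
  Finset.univ.filter (fun x => cl x = a)

lemma mem_Hcl {a : Fin (n+1)} {x} : x ∈ Hcl a ↔ cl x = a := by simp [Hcl]

def SaF (S : Finset (Equiv.Perm (Fin (n+1)))) (a : Fin (n+1)) :
    Finset (Equiv.Perm (Fin (n+1))) := S.filter (fun x => cl x = a)

def crossC (S : Finset (Equiv.Perm (Fin (n+1)))) :
    Finset (Equiv.Perm (Fin (n+1)) × Equiv.Perm (Fin (n+1))) :=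
  (cutP (n+1) S).filter (fun p => cl p.1 ≠ cl p.2)

def winC (a : Fin (n+1)) (S : Finset (Equiv.Perm (Fin (n+1)))) :
    Finset (Equiv.Perm (Fin (n+1)) × Equiv.Perm (Fin (n+1))) :=
  (cutP (n+1) S).filter (fun p => cl p.1 = a ∧ cl p.2 = a)

lemma count_main (S : Finset (Equiv.Perm (Fin (n+1)))) (Pr : Finset (Fin (n+1))) :
    ∑ a ∈ Pr, (winC a S).card + (crossC S).card ≤ (cutP (n+1) S).card := by
  classical
  have hdisj : ∀ a ∈ Pr, ∀ b ∈ Pr, a ≠ b → Disjoint (winC a S) (winC b S) := by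
    intro a _ b _ hab
    rw [Finset.disjoint_left]
    intro p hpa hpb
    simp only [winC, Finset.mem_filter] at hpa hpb
    exact hab (hpa.2.1.symm.trans hpb.2.1)
  have hU : (Pr.biUnion (fun a => winC a S)).card = ∑ a ∈ Pr, (winC a S).card :=
    Finset.card_biUnion hdisj
  have hd2 : Disjoint (Pr.biUnion (fun a => winC a S)) (crossC S) := by
    rw [Finset.disjoint_left]
    intro p hp hc
    simp only [Finset.mem_biUnion] at hp
    obtain ⟨a, _, hp⟩ := hp
    simp only [winC, Finset.mem_filter] at hp
    simp only [crossC, Finset.mem_filter] at hc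
    exact hc.2 (hp.2.1.trans hp.2.2.symm)
  calc ∑ a ∈ Pr, (winC a S).card + (crossC S).card
      = (Pr.biUnion (fun a => winC a S) ∪ crossC S).card := by
        rw [Finset.card_union_of_disjoint hd2, hU]
    _ ≤ (cutP (n+1) S).card := by
        apply Finset.card_le_card
        intro p hp
        rcases Finset.mem_union.1 hp with hp | hp
        · simp only [Finset.mem_biUnion] at hp
          obtain ⟨a, _, hp⟩ := hp
          exact Finset.mem_of_mem_filter p hp
        · exact Finset.mem_of_mem_filter p hp

lemma winC_transfer (S : Finset (Equiv.Perm (Fin (n+1)))) (a : Fin (n+1)) :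
    (cutP n (Finset.univ.filter fun σ => beta a σ ∈ S)).card ≤ (winC a S).card := by
  classical
  apply Finset.card_le_card_of_injOn (fun p => (beta a p.1, beta a p.2))
  · intro p hp
    rw [Finset.mem_coe, mem_cutP] at hp
    simp only [Finset.mem_filter, Finset.mem_univ, true_and] at hp
    simp only [Finset.mem_coe, winC, Finset.mem_filter, mem_cutP]
    exact ⟨⟨beta_adj hp.1, hp.2.1, hp.2.2⟩, cl_beta a _, cl_beta a _⟩
  · intro p _ q _ h
    have h1 := congrArg Prod.fst h
    have h2 := congrArg Prod.snd h
    simp only at h1 h2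
    exact Prod.ext (beta_inj a h1) (beta_inj a h2)

lemma card_T_eq (S : Finset (Equiv.Perm (Fin (n+1)))) (a : Fin (n+1)) :
    (Finset.univ.filter fun σ => beta a σ ∈ S).card = (SaF S a).card := by
  classical
  have himg : Finset.image (beta a) (Finset.univ.filter fun σ => beta a σ ∈ S) = SaF S a := by
    ext x
    simp only [Finset.mem_image, Finset.mem_filter, Finset.mem_univ, true_and, SaF]
    constructor
    · rintro ⟨σ, hσ, rfl⟩
      exact ⟨hσ, cl_beta a σ⟩
    · rintro ⟨hx, hcl⟩
      obtain ⟨σ, rfl⟩ := beta_surj hcl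
      exact ⟨σ, hx, rfl⟩
  rw [← himg, Finset.card_image_of_injective _ (beta_inj a)]

lemma card_Hcl (a : Fin (n+1)) : (Hcl (n := n) a).card = n.factorial := by
  classical
  have himg : Finset.image (beta a) Finset.univ = Hcl (n := n) a := by
    ext x
    simp only [Finset.mem_image, Finset.mem_univ, true_and, mem_Hcl]
    constructor
    · rintro ⟨σ, rfl⟩; exact cl_beta a σ
    · intro hx; obtain ⟨σ, rfl⟩ := beta_surj hx; exact ⟨σ, rfl⟩
  rw [← himg, Finset.card_image_of_injective _ (beta_inj a), Finset.card_univ,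
    Fintype.card_perm, Fintype.card_fin]

lemma cross_of_inj_snd (S : Finset (Equiv.Perm (Fin (n+1))))
    (W : Finset (Equiv.Perm (Fin (n+1)))) (f : Equiv.Perm (Fin (n+1)) → Equiv.Perm (Fin (n+1)))
    (h : ∀ w ∈ W, (f w, w) ∈ crossC S) : W.card ≤ (crossC S).card := by
  apply Finset.card_le_card_of_injOn (fun w => (f w, w)) h
  intro a _ b _ hab
  exact congrArg Prod.snd hab

lemma cross_of_inj_fst (S : Finset (Equiv.Perm (Fin (n+1))))
    (W : Finset (Equiv.Perm (Fin (n+1)))) (f : Equiv.Perm (Fin (n+1)) → Equiv.Perm (Fin (n+1)))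
    (h : ∀ w ∈ W, (w, f w) ∈ crossC S) : W.card ≤ (crossC S).card := by
  apply Finset.card_le_card_of_injOn (fun w => (w, f w)) h
  intro a _ b _ hab
  exact congrArg Prod.fst hab

lemma cross_two_out (hn : 2 ≤ n) (S : Finset (Equiv.Perm (Fin (n+1))))
    (W : Finset (Equiv.Perm (Fin (n+1))))
    (h : ∀ w ∈ W, (w, w * g1 n) ∈ crossC S ∧ (w, w * g2 n) ∈ crossC S) :
    2 * W.card ≤ (crossC S).card := by
  classical
  have hsub : W.biUnion (fun w => {(w, w * g1 n), (w, w * g2 n)}) ⊆ crossC S := by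
    intro p hp
    simp only [Finset.mem_biUnion, Finset.mem_insert, Finset.mem_singleton] at hp
    obtain ⟨w, hw, hp | hp⟩ := hp
    · exact hp ▸ (h w hw).1
    · exact hp ▸ (h w hw).2
  calc 2 * W.card = ∑ w ∈ W, ({(w, w * g1 n), (w, w * g2 n)} :
        Finset (Equiv.Perm (Fin (n+1)) × Equiv.Perm (Fin (n+1)))).card := by
        rw [Finset.sum_congr rfl (fun w _ => ?_), Finset.sum_const, smul_eq_mul, mul_comm]
        rw [Finset.card_insert_of_notMem (by simp [g1_ne_g2 hn w]), Finset.card_singleton]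
    _ = (W.biUnion (fun w => {(w, w * g1 n), (w, w * g2 n)})).card := by
        rw [Finset.card_biUnion]
        intro a _ b _ hab
        rw [Function.onFun, Finset.disjoint_left]
        intro p hpa hpb
        simp only [Finset.mem_insert, Finset.mem_singleton] at hpa hpb
        apply hab
        rcases hpa with h1 | h1 <;> rcases hpb with h2 | h2 <;>
          exact (congrArg Prod.fst h1.symm).trans (congrArg Prod.fst h2)
    _ ≤ (crossC S).card := Finset.card_le_card hsub

lemma cross_two_in (hn : 2 ≤ n) (S : Finset (Equiv.Perm (Fin (n+1))))
    (W : Finset (Equiv.Perm (Fin (n+1))))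
    (h : ∀ w ∈ W, (w * g1 n, w) ∈ crossC S ∧ (w * g2 n, w) ∈ crossC S) :
    2 * W.card ≤ (crossC S).card := by
  classical
  have hsub : W.biUnion (fun w => {(w * g1 n, w), (w * g2 n, w)}) ⊆ crossC S := by
    intro p hp
    simp only [Finset.mem_biUnion, Finset.mem_insert, Finset.mem_singleton] at hp
    obtain ⟨w, hw, hp | hp⟩ := hp
    · exact hp ▸ (h w hw).1
    · exact hp ▸ (h w hw).2
  calc 2 * W.card = ∑ w ∈ W, ({(w * g1 n, w), (w * g2 n, w)} :
        Finset (Equiv.Perm (Fin (n+1)) × Equiv.Perm (Fin (n+1)))).card := by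
        rw [Finset.sum_congr rfl (fun w _ => ?_), Finset.sum_const, smul_eq_mul, mul_comm]
        rw [Finset.card_insert_of_notMem (by simp [g1_ne_g2 hn w]), Finset.card_singleton]
    _ = (W.biUnion (fun w => {(w * g1 n, w), (w * g2 n, w)})).card := by
        rw [Finset.card_biUnion]
        intro a _ b _ hab
        rw [Function.onFun, Finset.disjoint_left]
        intro p hpa hpb
        simp only [Finset.mem_insert, Finset.mem_singleton] at hpa hpb
        apply hab
        rcases hpa with h1 | h1 <;> rcases hpb with h2 | h2 <;>
          exact (congrArg Prod.snd h1.symm).trans (congrArg Prod.snd h2)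
    _ ≤ (crossC S).card := Finset.card_le_card hsub

end Counting

section Pairs
variable {n : ℕ}

lemma exists_two_perms {m : ℕ} (hm : 4 ≤ m) (i j a b : Fin m) (hij : i ≠ j) (hab : a ≠ b) :
    ∃ x y : Equiv.Perm (Fin m), x ≠ y ∧ x i = a ∧ x j = b ∧ y i = a ∧ y j = b := by
  classical
  set τ := Equiv.swap i a with hτ
  have hτj : τ j ≠ a := by
    intro h
    exact hij (τ.injective (show τ j = τ i from h.trans (Equiv.swap_apply_left i a).symm)).symm
  set x := Equiv.swap (τ j) b * τ with hx
  have hxi : x i = a := by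
    rw [hx, Equiv.Perm.mul_apply, hτ, Equiv.swap_apply_left,
      Equiv.swap_apply_of_ne_of_ne (Ne.symm hτj) hab]
  have hxj : x j = b := by
    rw [hx, Equiv.Perm.mul_apply, Equiv.swap_apply_left]
  have hcard : 1 < (({i, j}ᶜ : Finset (Fin m))).card := by
    have h1 : (({i, j} : Finset (Fin m))).card ≤ 2 := Finset.card_insert_le _ _ |>.trans (by simp)
    have h2 := Finset.card_compl_add_card ({i, j} : Finset (Fin m))
    have h3 : Fintype.card (Fin m) = m := Fintype.card_fin m
    omega
  obtain ⟨k, hk, l, hl, hkl⟩ := Finset.one_lt_card.1 hcard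
  simp only [Finset.mem_compl, Finset.mem_insert, Finset.mem_singleton, not_or] at hk hl
  refine ⟨x, x * Equiv.swap k l, ?_, hxi, hxj, ?_, ?_⟩
  · intro h
    have := congrArg (fun z => z k) h
    simp only [Equiv.Perm.mul_apply, Equiv.swap_apply_left] at this
    exact hkl (x.injective this)
  · rw [Equiv.Perm.mul_apply, Equiv.swap_apply_of_ne_of_ne (Ne.symm hk.1) (Ne.symm hl.1), hxi]
  · rw [Equiv.Perm.mul_apply, Equiv.swap_apply_of_ne_of_ne (Ne.symm hk.2) (Ne.symm hl.2), hxj]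

lemma pair_edges (hn : 3 ≤ n) (S : Finset (Equiv.Perm (Fin (n+1)))) {a b : Fin (n+1)}
    (hab : a ≠ b) (ha : Hcl a ⊆ S) (hb : ∀ x ∈ Hcl b, x ∉ S) :
    ∃ Eab : Finset (Equiv.Perm (Fin (n+1)) × Equiv.Perm (Fin (n+1))),
      Eab.card = 4 ∧ Eab ⊆ crossC S ∧ ∀ p ∈ Eab, cl p.1 = a ∧ cl p.2 = b := by
  classical
  have hm : 4 ≤ n + 1 := by omega
  have h1n : 1 ≤ n := by omega
  obtain ⟨x1, x2, hx12, hx1l, hx1p, hx2l, hx2p⟩ :=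
    exists_two_perms hm (Fin.last n) (pm1 n) a b (Ne.symm (pm1_ne_last h1n)) hab
  obtain ⟨x3, x4, hx34, hx3l, hx3p, hx4l, hx4p⟩ :=
    exists_two_perms hm (Fin.last n) (0 : Fin (n+1)) a b (Ne.symm (zero_ne_last h1n)) hab
  have hmemg1 : ∀ x : Equiv.Perm (Fin (n+1)), x (Fin.last n) = a → x (pm1 n) = b →
      (x, x * g1 n) ∈ crossC S ∧ cl x = a ∧ cl (x * g1 n) = b := by
    intro x hxa hxb
    have hclx : cl x = a := hxa
    have hcly : cl (x * g1 n) = b := by rw [cl_mul_g1]; exact hxb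
    refine ⟨?_, hclx, hcly⟩
    simp only [crossC, Finset.mem_filter, mem_cutP]
    refine ⟨⟨adj_g1 h1n x, ha (mem_Hcl.2 hclx), hb _ (mem_Hcl.2 hcly)⟩, ?_⟩
    simp only [hclx, hcly]
    exact hab
  have hmemg2 : ∀ x : Equiv.Perm (Fin (n+1)), x (Fin.last n) = a → x 0 = b →
      (x, x * g2 n) ∈ crossC S ∧ cl x = a ∧ cl (x * g2 n) = b := by
    intro x hxa hxb
    have hclx : cl x = a := hxa
    have hcly : cl (x * g2 n) = b := by rw [cl_mul_g2]; exact hxb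
    refine ⟨?_, hclx, hcly⟩
    simp only [crossC, Finset.mem_filter, mem_cutP]
    refine ⟨⟨adj_g2 h1n x, ha (mem_Hcl.2 hclx), hb _ (mem_Hcl.2 hcly)⟩, ?_⟩
    simp only [hclx, hcly]
    exact hab
  have hp0 : (pm1 n) ≠ (0 : Fin (n+1)) := pm1_ne_zero (by omega)
  have key2 : ∀ u v : Equiv.Perm (Fin (n+1)), u (pm1 n) = b → v 0 = b → u ≠ v := by
    intro u v hu hv h
    subst h
    exact hp0 (u.injective (hu.trans hv.symm))
  have h13 : x1 ≠ x3 := key2 x1 x3 hx1p hx3p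
  have h14 : x1 ≠ x4 := key2 x1 x4 hx1p hx4p
  have h23 : x2 ≠ x3 := key2 x2 x3 hx2p hx3p
  have h24 : x2 ≠ x4 := key2 x2 x4 hx2p hx4p
  refine ⟨{(x1, x1 * g1 n), (x2, x2 * g1 n), (x3, x3 * g2 n), (x4, x4 * g2 n)}, ?_, ?_, ?_⟩
  · rw [Finset.card_insert_of_notMem, Finset.card_insert_of_notMem,
      Finset.card_insert_of_notMem, Finset.card_singleton]
    · simp only [Finset.mem_singleton]
      exact fun h => hx34 (congrArg Prod.fst h)
    · simp only [Finset.mem_insert, Finset.mem_singleton, not_or]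
      exact ⟨fun h => h23 (congrArg Prod.fst h), fun h => h24 (congrArg Prod.fst h)⟩
    · simp only [Finset.mem_insert, Finset.mem_singleton, not_or]
      exact ⟨fun h => hx12 (congrArg Prod.fst h), fun h => h13 (congrArg Prod.fst h),
        fun h => h14 (congrArg Prod.fst h)⟩
  · intro p hp
    simp only [Finset.mem_insert, Finset.mem_singleton] at hp
    rcases hp with rfl | rfl | rfl | rfl
    · exact (hmemg1 x1 hx1l hx1p).1
    · exact (hmemg1 x2 hx2l hx2p).1
    · exact (hmemg2 x3 hx3l hx3p).1
    · exact (hmemg2 x4 hx4l hx4p).1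
  · intro p hp
    simp only [Finset.mem_insert, Finset.mem_singleton] at hp
    rcases hp with rfl | rfl | rfl | rfl
    · exact ⟨(hmemg1 x1 hx1l hx1p).2.1, (hmemg1 x1 hx1l hx1p).2.2⟩
    · exact ⟨(hmemg1 x2 hx2l hx2p).2.1, (hmemg1 x2 hx2l hx2p).2.2⟩
    · exact ⟨(hmemg2 x3 hx3l hx3p).2.1, (hmemg2 x3 hx3l hx3p).2.2⟩
    · exact ⟨(hmemg2 x4 hx4l hx4p).2.1, (hmemg2 x4 hx4l hx4p).2.2⟩

lemma cross_pairs (hn : 3 ≤ n) (S : Finset (Equiv.Perm (Fin (n+1))))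
    (A B : Finset (Fin (n+1))) (hA : ∀ a ∈ A, Hcl a ⊆ S)
    (hB : ∀ b ∈ B, ∀ x ∈ Hcl b, x ∉ S) (hAB : Disjoint A B) :
    4 * (A.card * B.card) ≤ (crossC S).card := by
  classical
  have key : ∀ q : Fin (n+1) × Fin (n+1), q ∈ A ×ˢ B →
      ∃ Eab : Finset (Equiv.Perm (Fin (n+1)) × Equiv.Perm (Fin (n+1))),
        Eab.card = 4 ∧ Eab ⊆ crossC S ∧ ∀ p ∈ Eab, cl p.1 = q.1 ∧ cl p.2 = q.2 := by
    intro q hq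
    rw [Finset.mem_product] at hq
    have hab : q.1 ≠ q.2 := fun h => (Finset.disjoint_left.1 hAB hq.1) (h ▸ hq.2)
    exact pair_edges hn S hab (hA _ hq.1) (hB _ hq.2)
  choose D hD4 hDsub hDcl using key
  let D' : Fin (n+1) × Fin (n+1) → Finset (Equiv.Perm (Fin (n+1)) × Equiv.Perm (Fin (n+1))) :=
    fun q => if h : q ∈ A ×ˢ B then D q h else ∅
  have hcalc : ((A ×ˢ B).attach.biUnion (fun q => D q.1 q.2)).card = 4 * (A.card * B.card) := by
    rw [Finset.card_biUnion]
    · rw [Finset.sum_congr rfl (fun q _ => hD4 q.1 q.2), Finset.sum_const, smul_eq_mul,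
        Finset.card_attach, Finset.card_product, mul_comm]
    · intro q _ r _ hqr
      rw [Function.onFun, Finset.disjoint_left]
      intro p hpq hpr
      apply hqr
      have h1 := hDcl q.1 q.2 p hpq
      have h2 := hDcl r.1 r.2 p hpr
      apply Subtype.ext
      exact Prod.ext (h1.1.symm.trans h2.1) (h1.2.symm.trans h2.2)
  calc 4 * (A.card * B.card) = ((A ×ˢ B).attach.biUnion (fun q => D q.1 q.2)).card := hcalc.symm
    _ ≤ (crossC S).card := by
        apply Finset.card_le_card
        intro p hp
        simp only [Finset.mem_biUnion] at hp
        obtain ⟨q, _, hp⟩ := hp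
        exact hDsub q.1 q.2 hp

end Pairs

section StepDefs
variable {n : ℕ}

def LamP (n : ℕ) : Prop := ∀ S : Finset (Equiv.Perm (Fin n)), S.Nonempty → S ≠ Finset.univ →
  2*n - 3 ≤ (cutP n S).card

def StarP (n : ℕ) : Prop := ∀ S : Finset (Equiv.Perm (Fin n)), 2 ≤ S.card →
  S.card + 2 ≤ n.factorial → 4*n - 8 ≤ (cutP n S).card

lemma cardV (m : ℕ) : Fintype.card (Equiv.Perm (Fin m)) = m.factorial := by
  rw [Fintype.card_perm, Fintype.card_fin]

lemma fact_ge2n : ∀ n : ℕ, 3 ≤ n → 2*n ≤ n.factorial := by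
  intro n hn
  induction n with
  | zero => omega
  | succ k ih =>
    rcases Nat.lt_or_ge k 3 with hk | hk
    · interval_cases k <;> simp [Nat.factorial] <;> omega
    · have h1 := ih (by omega)
      have h2 : (k+1).factorial = (k+1) * k.factorial := rfl
      have h3 : 2 ≤ k.factorial := by omega
      have h4 : (k+1) * 2 ≤ (k+1) * k.factorial := Nat.mul_le_mul_left _ h3
      omega

lemma prod_bound {a b m : ℕ} (ha : 1 ≤ a) (hb : 1 ≤ b) (h : m + 1 ≤ a + b) : m ≤ a * b := by
  obtain ⟨a', rfl⟩ := Nat.exists_eq_add_of_le ha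
  obtain ⟨b', rfl⟩ := Nat.exists_eq_add_of_le hb
  have hq : (1+a')*(1+b') = 1 + a' + b' + a'*b' := by ring
  omega

def clFull (S : Finset (Equiv.Perm (Fin (n+1)))) : Finset (Fin (n+1)) :=
  Finset.univ.filter (fun a => Hcl a ⊆ S)

def clEmpty (S : Finset (Equiv.Perm (Fin (n+1)))) : Finset (Fin (n+1)) :=
  Finset.univ.filter (fun a => SaF S a = ∅)

def clProper (S : Finset (Equiv.Perm (Fin (n+1)))) : Finset (Fin (n+1)) :=
  Finset.univ.filter (fun a => (SaF S a).Nonempty ∧ ¬ Hcl a ⊆ S)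

lemma mem_clFull {S} {a : Fin (n+1)} : a ∈ clFull S ↔ Hcl a ⊆ S := by simp [clFull]
lemma mem_clEmpty {S} {a : Fin (n+1)} : a ∈ clEmpty S ↔ SaF S a = ∅ := by simp [clEmpty]
lemma mem_clProper {S} {a : Fin (n+1)} :
    a ∈ clProper S ↔ (SaF S a).Nonempty ∧ ¬ Hcl a ⊆ S := by simp [clProper]

lemma mem_SaF {S : Finset (Equiv.Perm (Fin (n+1)))} {a x} :
    x ∈ SaF S a ↔ x ∈ S ∧ cl x = a := by simp [SaF]

lemma Hcl_nonempty (a : Fin (n+1)) : (Hcl (n := n) a).Nonempty := by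
  rw [← Finset.card_pos, card_Hcl]
  exact Nat.factorial_pos n

lemma full_not_empty {S : Finset (Equiv.Perm (Fin (n+1)))} {a : Fin (n+1)}
    (h : Hcl a ⊆ S) : SaF S a ≠ ∅ := by
  obtain ⟨x, hx⟩ := Hcl_nonempty a
  intro he
  have : x ∈ SaF S a := mem_SaF.2 ⟨h hx, mem_Hcl.1 hx⟩
  simp [he] at this

lemma trichotomy (S : Finset (Equiv.Perm (Fin (n+1)))) (a : Fin (n+1)) :
    a ∈ clFull S ∨ a ∈ clEmpty S ∨ a ∈ clProper S := by
  by_cases h1 : Hcl a ⊆ S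
  · exact Or.inl (mem_clFull.2 h1)
  by_cases h2 : SaF S a = ∅
  · exact Or.inr (Or.inl (mem_clEmpty.2 h2))
  · exact Or.inr (Or.inr (mem_clProper.2 ⟨Finset.nonempty_iff_ne_empty.2 h2, h1⟩))

lemma card_classes (S : Finset (Equiv.Perm (Fin (n+1)))) :
    (clFull S).card + (clEmpty S).card + (clProper S).card = n + 1 := by
  classical
  have hd1 : Disjoint (clFull S) (clEmpty S) := by
    rw [Finset.disjoint_left]
    intro a h1 h2
    exact full_not_empty (mem_clFull.1 h1) (mem_clEmpty.1 h2)
  have hd2 : Disjoint (clFull S ∪ clEmpty S) (clProper S) := by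
    rw [Finset.disjoint_left]
    intro a h1 h2
    rw [mem_clProper] at h2
    rcases Finset.mem_union.1 h1 with h | h
    · exact h2.2 (mem_clFull.1 h)
    · exact Finset.nonempty_iff_ne_empty.1 h2.1 (mem_clEmpty.1 h)
  have huniv : clFull S ∪ clEmpty S ∪ clProper S = Finset.univ := by
    apply Finset.eq_univ_of_forall
    intro a
    rcases trichotomy S a with h | h | h
    · exact Finset.mem_union.2 (Or.inl (Finset.mem_union.2 (Or.inl h)))
    · exact Finset.mem_union.2 (Or.inl (Finset.mem_union.2 (Or.inr h)))
    · exact Finset.mem_union.2 (Or.inr h)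
  have := congrArg Finset.card huniv
  rw [Finset.card_union_of_disjoint hd2, Finset.card_union_of_disjoint hd1,
    Finset.card_univ, Fintype.card_fin] at this
  exact this

lemma cl_mem_of_mem {S : Finset (Equiv.Perm (Fin (n+1)))} {x} (hx : x ∈ S) :
    cl x ∉ clEmpty S := by
  rw [mem_clEmpty]
  intro h
  have : x ∈ SaF S (cl x) := mem_SaF.2 ⟨hx, rfl⟩
  simp [h] at this

lemma cl_mem_of_not_mem {S : Finset (Equiv.Perm (Fin (n+1)))} {x} (hx : x ∉ S) :
    cl x ∉ clFull S := by
  rw [mem_clFull]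
  intro h
  exact hx (h (mem_Hcl.2 rfl))

lemma win_lower_lam (hLam : LamP n) (S : Finset (Equiv.Perm (Fin (n+1)))) {p : Fin (n+1)}
    (hp : p ∈ clProper S) : 2*n - 3 ≤ (winC p S).card := by
  classical
  rw [mem_clProper] at hp
  refine le_trans (le_trans ?_ (winC_transfer S p)) (le_refl _)
  apply hLam
  · obtain ⟨x, hx⟩ := hp.1
    rw [mem_SaF] at hx
    obtain ⟨σ, rfl⟩ := beta_surj hx.2
    exact ⟨σ, by simp [hx.1]⟩
  · intro h
    apply hp.2
    intro x hx
    obtain ⟨σ, rfl⟩ := beta_surj (mem_Hcl.1 hx)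
    have : σ ∈ Finset.univ.filter fun σ => beta p σ ∈ S := by rw [h]; exact Finset.mem_univ σ
    exact (Finset.mem_filter.1 this).2

lemma win_lower_star (hStar : StarP n) (S : Finset (Equiv.Perm (Fin (n+1)))) {p : Fin (n+1)}
    (h2 : 2 ≤ (SaF S p).card) (h2' : (SaF S p).card + 2 ≤ n.factorial) :
    4*n - 8 ≤ (winC p S).card := by
  classical
  refine le_trans ?_ (winC_transfer S p)
  apply hStar
  · rw [card_T_eq]; exact h2
  · rw [card_T_eq]; exact h2'

lemma SaF_subset_Hcl {S : Finset (Equiv.Perm (Fin (n+1)))} {a : Fin (n+1)} :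
    SaF S a ⊆ Hcl a := by
  intro x hx
  exact mem_Hcl.2 (mem_SaF.1 hx).2

lemma mem_crossC {S : Finset (Equiv.Perm (Fin (n+1)))} {p} :
    p ∈ crossC S ↔ ((BS (n+1)).Adj p.1 p.2 ∧ p.1 ∈ S ∧ p.2 ∉ S) ∧ cl p.1 ≠ cl p.2 := by
  simp [crossC, mem_cutP]

end StepDefs

section StepLam
variable {n : ℕ}

lemma crossC_out1 (h1n : 1 ≤ n) {S : Finset (Equiv.Perm (Fin (n+1)))} {w}
    (hw : w ∈ S) (h1 : w * g1 n ∉ S) : (w, w * g1 n) ∈ crossC S :=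
  mem_crossC.2 ⟨⟨adj_g1 h1n w, hw, h1⟩, Ne.symm (cl_mul_g1_ne h1n w)⟩

lemma crossC_out2 (h1n : 1 ≤ n) {S : Finset (Equiv.Perm (Fin (n+1)))} {w}
    (hw : w ∈ S) (h1 : w * g2 n ∉ S) : (w, w * g2 n) ∈ crossC S :=
  mem_crossC.2 ⟨⟨adj_g2 h1n w, hw, h1⟩, Ne.symm (cl_mul_g2_ne h1n w)⟩

lemma crossC_in1 (h1n : 1 ≤ n) {S : Finset (Equiv.Perm (Fin (n+1)))} {w}
    (hw : w ∉ S) (h1 : w * g1 n ∈ S) : (w * g1 n, w) ∈ crossC S :=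
  mem_crossC.2 ⟨⟨(adj_g1 h1n w).symm, h1, hw⟩, cl_mul_g1_ne h1n w⟩

lemma crossC_in2 (h1n : 1 ≤ n) {S : Finset (Equiv.Perm (Fin (n+1)))} {w}
    (hw : w ∉ S) (h1 : w * g2 n ∈ S) : (w * g2 n, w) ∈ crossC S :=
  mem_crossC.2 ⟨⟨(adj_g2 h1n w).symm, h1, hw⟩, cl_mul_g2_ne h1n w⟩

lemma empty_cluster_disj {S : Finset (Equiv.Perm (Fin (n+1)))} {b : Fin (n+1)}
    (hb : b ∈ clEmpty S) : ∀ x ∈ Hcl b, x ∉ S := by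
  intro x hx hxS
  have : x ∈ SaF S b := mem_SaF.2 ⟨hxS, mem_Hcl.1 hx⟩
  rw [mem_clEmpty.1 hb] at this
  simp at this

lemma lam_step (hn : 3 ≤ n) (hLam : LamP n) (S : Finset (Equiv.Perm (Fin (n+1))))
    (hS : S.Nonempty) (hSne : S ≠ Finset.univ) : 2*(n+1) - 3 ≤ (cutP (n+1) S).card := by
  classical
  have h1n : 1 ≤ n := by omega
  have h2n : 2 ≤ n := by omega
  have hmain := count_main S (clProper S)
  have hwin : (clProper S).card * (2*n-3) ≤ ∑ a ∈ clProper S, (winC a S).card := by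
    have h := Finset.card_nsmul_le_sum (clProper S) (fun a => (winC a S).card) (2*n-3)
      (fun a ha => win_lower_lam hLam S ha)
    simpa [smul_eq_mul] using h
  have hScne : Sᶜ.Nonempty := by
    rw [← Finset.card_pos, Finset.card_compl]
    have := Finset.card_lt_card (Finset.ssubset_univ_iff.2 hSne)
    rw [Finset.card_univ] at this
    omega
  rcases Nat.lt_or_ge (clProper S).card 2 with hk | hk
  · rcases Nat.lt_or_ge (clProper S).card 1 with hk0 | hk1
    · -- no proper clusters
      have hkz : clProper S = ∅ := Finset.card_eq_zero.1 (by omega)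
      rw [hkz, Finset.sum_empty] at hmain
      obtain ⟨x, hx⟩ := hS
      obtain ⟨w, hw⟩ := hScne
      have hxA : cl x ∈ clFull S := by
        rcases trichotomy S (cl x) with h | h | h
        · exact h
        · exact absurd h (cl_mem_of_mem hx)
        · rw [hkz] at h; simp at h
      have hwB : cl w ∈ clEmpty S := by
        rcases trichotomy S (cl w) with h | h | h
        · exact absurd h (cl_mem_of_not_mem (Finset.mem_compl.1 hw))
        · exact h
        · rw [hkz] at h; simp at h
      have hd : Disjoint (clFull S) (clEmpty S) := by
        rw [Finset.disjoint_left]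
        intro a h1 h2
        exact full_not_empty (mem_clFull.1 h1) (mem_clEmpty.1 h2)
      have hcross := cross_pairs hn S (clFull S) (clEmpty S)
        (fun a ha => mem_clFull.1 ha) (fun b hb => empty_cluster_disj hb) hd
      have hsum := card_classes S
      have hprod : n ≤ (clFull S).card * (clEmpty S).card := by
        apply prod_bound
        · exact Finset.card_pos.2 ⟨cl x, hxA⟩
        · exact Finset.card_pos.2 ⟨cl w, hwB⟩
        · omega
      omega
    · -- exactly one proper cluster
      obtain ⟨p, hp⟩ := Finset.card_eq_one.1 (Nat.le_antisymm (by omega) hk1)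
      have hpP : p ∈ clProper S := by rw [hp]; exact Finset.mem_singleton_self p
      have hwp : 2*n-3 ≤ (winC p S).card := win_lower_lam hLam S hpP
      have hwsum : ∑ a ∈ clProper S, (winC a S).card = (winC p S).card := by
        rw [hp, Finset.sum_singleton]
      by_cases hA0 : clFull S = ∅
      · -- S contained in cluster p
        have hsub : ∀ x ∈ S, cl x = p := by
          intro x hx
          rcases trichotomy S (cl x) with h | h | h
          · rw [hA0] at h; simp at h
          · exact absurd h (cl_mem_of_mem hx)
          · rw [hp] at h; exact Finset.mem_singleton.1 h
        have hcross : 2 * S.card ≤ (crossC S).card := by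
          apply cross_two_out h2n
          intro w hw
          have hg1 : w * g1 n ∉ S := fun hmem =>
            cl_mul_g1_ne h1n w (by rw [hsub _ hmem, hsub _ hw])
          have hg2 : w * g2 n ∉ S := fun hmem =>
            cl_mul_g2_ne h1n w (by rw [hsub _ hmem, hsub _ hw])
          exact ⟨crossC_out1 h1n hw hg1, crossC_out2 h1n hw hg2⟩
        have hS1 : 1 ≤ S.card := Finset.card_pos.2 hS
        omega
      · by_cases hB0 : clEmpty S = ∅
        · -- complement contained in cluster p
          have hsub : ∀ w ∈ Sᶜ, cl w = p := by
            intro w hw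
            rcases trichotomy S (cl w) with h | h | h
            · exact absurd h (cl_mem_of_not_mem (Finset.mem_compl.1 hw))
            · rw [hB0] at h; simp at h
            · rw [hp] at h; exact Finset.mem_singleton.1 h
          have hfull : ∀ y : Equiv.Perm (Fin (n+1)), cl y ≠ p → y ∈ S := by
            intro y hy
            rcases trichotomy S (cl y) with h | h | h
            · exact mem_clFull.1 h (mem_Hcl.2 rfl)
            · rw [hB0] at h; simp at h
            · rw [hp] at h; exact absurd (Finset.mem_singleton.1 h) hy
          have hcross : 2 * Sᶜ.card ≤ (crossC S).card := by
            apply cross_two_in h2n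
            intro w hw
            have hwS : w ∉ S := Finset.mem_compl.1 hw
            have hg1 : w * g1 n ∈ S :=
              hfull _ (fun h => cl_mul_g1_ne h1n w (h.trans (hsub w hw).symm))
            have hg2 : w * g2 n ∈ S :=
              hfull _ (fun h => cl_mul_g2_ne h1n w (h.trans (hsub w hw).symm))
            exact ⟨crossC_in1 h1n hwS hg1, crossC_in2 h1n hwS hg2⟩
          have hS1 : 1 ≤ Sᶜ.card := Finset.card_pos.2 hScne
          omega
        · -- both full and empty clusters exist
          have hd : Disjoint (clFull S) (clEmpty S) := by
            rw [Finset.disjoint_left]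
            intro a h1 h2
            exact full_not_empty (mem_clFull.1 h1) (mem_clEmpty.1 h2)
          have hcross := cross_pairs hn S (clFull S) (clEmpty S)
            (fun a ha => mem_clFull.1 ha) (fun b hb => empty_cluster_disj hb) hd
          have hA1 : 1 ≤ (clFull S).card :=
            Finset.card_pos.2 (Finset.nonempty_iff_ne_empty.2 hA0)
          have hB1 : 1 ≤ (clEmpty S).card :=
            Finset.card_pos.2 (Finset.nonempty_iff_ne_empty.2 hB0)
          have hprod : 1 ≤ (clFull S).card * (clEmpty S).card := Nat.mul_pos hA1 hB1
          omega
  · -- at least two proper clusters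
    have h2 : 2*(2*n-3) ≤ ∑ a ∈ clProper S, (winC a S).card :=
      le_trans (Nat.mul_le_mul_right _ hk) hwin
    omega

lemma not_three_distinct {α : Type*} [DecidableEq α] {s : Finset α} (hs : s.card = 2)
    {u v w : α} (hu : u ∈ s) (hv : v ∈ s) (hw : w ∈ s)
    (huv : u ≠ v) (huw : u ≠ w) (hvw : v ≠ w) : False := by
  have hsub : ({u, v, w} : Finset α) ⊆ s := by
    intro x hx
    simp only [Finset.mem_insert, Finset.mem_singleton] at hx
    rcases hx with rfl | rfl | rfl <;> assumption
  have hcard : ({u, v, w} : Finset α).card = 3 := by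
    rw [Finset.card_insert_of_notMem (by simp [huv, huw]),
      Finset.card_insert_of_notMem (by simp [hvw]), Finset.card_singleton]
  have := Finset.card_le_card hsub
  omega

lemma star_step (hn : 3 ≤ n) (hLam : LamP n) (hStar : StarP n)
    (S : Finset (Equiv.Perm (Fin (n+1)))) (h2 : 2 ≤ S.card)
    (h2c : S.card + 2 ≤ (n+1).factorial) : 4*(n+1) - 8 ≤ (cutP (n+1) S).card := by
  classical
  have h1n : 1 ≤ n := by omega
  have h2n : 2 ≤ n := by omega
  have hmain := count_main S (clProper S)
  have hwin : (clProper S).card * (2*n-3) ≤ ∑ a ∈ clProper S, (winC a S).card := by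
    have h := Finset.card_nsmul_le_sum (clProper S) (fun a => (winC a S).card) (2*n-3)
      (fun a ha => win_lower_lam hLam S ha)
    simpa [smul_eq_mul] using h
  have hSc2 : 2 ≤ Sᶜ.card := by
    rw [Finset.card_compl, cardV]
    omega
  have hS : S.Nonempty := Finset.card_pos.1 (by omega)
  have hScne : Sᶜ.Nonempty := Finset.card_pos.1 (by omega)
  have hd : Disjoint (clFull S) (clEmpty S) := by
    rw [Finset.disjoint_left]
    intro a ha1 ha2
    exact full_not_empty (mem_clFull.1 ha1) (mem_clEmpty.1 ha2)
  rcases Nat.lt_or_ge (clProper S).card 3 with hklt | hk3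
  rcases Nat.lt_or_ge (clProper S).card 2 with hklt2 | hk2
  rcases Nat.lt_or_ge (clProper S).card 1 with hklt1 | hk1
  · -- k = 0
    have hkz : clProper S = ∅ := Finset.card_eq_zero.1 (by omega)
    rw [hkz, Finset.sum_empty] at hmain
    obtain ⟨x, hx⟩ := hS
    obtain ⟨w, hw⟩ := hScne
    have hxA : cl x ∈ clFull S := by
      rcases trichotomy S (cl x) with h | h | h
      · exact h
      · exact absurd h (cl_mem_of_mem hx)
      · rw [hkz] at h; simp at h
    have hwB : cl w ∈ clEmpty S := by
      rcases trichotomy S (cl w) with h | h | h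
      · exact absurd h (cl_mem_of_not_mem (Finset.mem_compl.1 hw))
      · exact h
      · rw [hkz] at h; simp at h
    have hcross := cross_pairs hn S (clFull S) (clEmpty S)
      (fun a ha => mem_clFull.1 ha) (fun b hb => empty_cluster_disj hb) hd
    have hsum := card_classes S
    have hprod : n ≤ (clFull S).card * (clEmpty S).card := by
      apply prod_bound
      · exact Finset.card_pos.2 ⟨cl x, hxA⟩
      · exact Finset.card_pos.2 ⟨cl w, hwB⟩
      · omega
    omega
  · -- k = 1
    obtain ⟨p, hp⟩ := Finset.card_eq_one.1 (Nat.le_antisymm (by omega) hk1)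
    have hpP : p ∈ clProper S := by rw [hp]; exact Finset.mem_singleton_self p
    have hwp : 2*n-3 ≤ (winC p S).card := win_lower_lam hLam S hpP
    have hwsum : ∑ a ∈ clProper S, (winC a S).card = (winC p S).card := by
      rw [hp, Finset.sum_singleton]
    have hfact := fact_ge2n n hn
    by_cases hA0 : clFull S = ∅
    · -- S contained in cluster p
      have hsub : ∀ x ∈ S, cl x = p := by
        intro x hx
        rcases trichotomy S (cl x) with h | h | h
        · rw [hA0] at h; simp at h
        · exact absurd h (cl_mem_of_mem hx)
        · rw [hp] at h; exact Finset.mem_singleton.1 h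
      have hSaF : SaF S p = S := by
        ext x
        rw [mem_SaF]
        exact ⟨fun h => h.1, fun h => ⟨h, hsub x h⟩⟩
      have hcross : 2 * S.card ≤ (crossC S).card := by
        apply cross_two_out h2n
        intro w hw
        have hg1 : w * g1 n ∉ S := fun hmem =>
          cl_mul_g1_ne h1n w (by rw [hsub _ hmem, hsub _ hw])
        have hg2 : w * g2 n ∉ S := fun hmem =>
          cl_mul_g2_ne h1n w (by rw [hsub _ hmem, hsub _ hw])
        exact ⟨crossC_out1 h1n hw hg1, crossC_out2 h1n hw hg2⟩
      by_cases hF : S.card + 2 ≤ n.factorial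
      · have hwinp : 4*n-8 ≤ (winC p S).card :=
          win_lower_star hStar S (by rw [hSaF]; exact h2) (by rw [hSaF]; exact hF)
        omega
      · omega
    · by_cases hB0 : clEmpty S = ∅
      · -- complement contained in cluster p
        have hsubc : ∀ w ∈ Sᶜ, cl w = p := by
          intro w hw
          rcases trichotomy S (cl w) with h | h | h
          · exact absurd h (cl_mem_of_not_mem (Finset.mem_compl.1 hw))
          · rw [hB0] at h; simp at h
          · rw [hp] at h; exact Finset.mem_singleton.1 h
        have hfull : ∀ y : Equiv.Perm (Fin (n+1)), cl y ≠ p → y ∈ S := by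
          intro y hy
          rcases trichotomy S (cl y) with h | h | h
          · exact mem_clFull.1 h (mem_Hcl.2 rfl)
          · rw [hB0] at h; simp at h
          · rw [hp] at h; exact absurd (Finset.mem_singleton.1 h) hy
        have hcross : 2 * Sᶜ.card ≤ (crossC S).card := by
          apply cross_two_in h2n
          intro w hw
          have hwS : w ∉ S := Finset.mem_compl.1 hw
          have hg1 : w * g1 n ∈ S :=
            hfull _ (fun h => cl_mul_g1_ne h1n w (h.trans (hsubc w hw).symm))
          have hg2 : w * g2 n ∈ S :=
            hfull _ (fun h => cl_mul_g2_ne h1n w (h.trans (hsubc w hw).symm))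
          exact ⟨crossC_in1 h1n hwS hg1, crossC_in2 h1n hwS hg2⟩
        have hunion : (SaF S p).card + Sᶜ.card ≤ n.factorial := by
          have hsub2 : SaF S p ∪ Sᶜ ⊆ Hcl p := by
            intro x hx
            rcases Finset.mem_union.1 hx with h | h
            · exact SaF_subset_Hcl h
            · exact mem_Hcl.2 (hsubc x h)
          have hdisj2 : Disjoint (SaF S p) Sᶜ := by
            rw [Finset.disjoint_left]
            intro x hx1 hx2
            exact (Finset.mem_compl.1 hx2) (mem_SaF.1 hx1).1
          have := Finset.card_le_card hsub2
          rw [Finset.card_union_of_disjoint hdisj2, card_Hcl] at this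
          exact this
        by_cases h2p : 2 ≤ (SaF S p).card
        · have hwinp : 4*n-8 ≤ (winC p S).card :=
            win_lower_star hStar S h2p (by omega)
          omega
        · -- tiny S∩Hp: complement nearly all of cluster
          have hcov : n.factorial ≤ (SaF S p).card + Sᶜ.card := by
            have hsub3 : Hcl p ⊆ SaF S p ∪ Sᶜ := by
              intro x hx
              by_cases hxS : x ∈ S
              · exact Finset.mem_union.2 (Or.inl (mem_SaF.2 ⟨hxS, mem_Hcl.1 hx⟩))
              · exact Finset.mem_union.2 (Or.inr (Finset.mem_compl.2 hxS))
            have := Finset.card_le_card hsub3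
            rw [card_Hcl] at this
            exact le_trans this (Finset.card_union_le _ _)
          omega
      · -- both full and empty clusters exist
        have hcross := cross_pairs hn S (clFull S) (clEmpty S)
          (fun a ha => mem_clFull.1 ha) (fun b hb => empty_cluster_disj hb) hd
        have hsum := card_classes S
        have hA1 : 1 ≤ (clFull S).card :=
          Finset.card_pos.2 (Finset.nonempty_iff_ne_empty.2 hA0)
        have hB1 : 1 ≤ (clEmpty S).card :=
          Finset.card_pos.2 (Finset.nonempty_iff_ne_empty.2 hB0)
        have hprod : n - 1 ≤ (clFull S).card * (clEmpty S).card := by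
          apply prod_bound hA1 hB1
          omega
        omega
  · -- k = 2
    have hk2 : (clProper S).card = 2 := Nat.le_antisymm (by omega) hk2
    have hw2 : 2*(2*n-3) ≤ ∑ a ∈ clProper S, (winC a S).card := by
      calc 2*(2*n-3) = (clProper S).card * (2*n-3) := by rw [hk2]
        _ ≤ _ := hwin
    by_cases hA0 : clFull S = ∅
    · -- every vertex of S is in a proper cluster
      have hsub : ∀ x ∈ S, cl x ∈ clProper S := by
        intro x hx
        rcases trichotomy S (cl x) with h | h | h
        · rw [hA0] at h; simp at h
        · exact absurd h (cl_mem_of_mem hx)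
        · exact h
      set f : Equiv.Perm (Fin (n+1)) → Equiv.Perm (Fin (n+1)) :=
        fun w => if cl (w * g1 n) ∈ clProper S then w * g2 n else w * g1 n with hf
      have hcross : S.card ≤ (crossC S).card := by
        apply cross_of_inj_fst S S f
        intro w hw
        have hnotmem : cl (f w) ∉ clProper S := by
          rw [hf]
          by_cases hc : cl (w * g1 n) ∈ clProper S
          · simp only [hc, if_true]
            intro hc2
            exact not_three_distinct hk2 (hsub w hw) hc hc2
              (Ne.symm (cl_mul_g1_ne h1n w)) (Ne.symm (cl_mul_g2_ne h1n w))
              (cl_mul_g1_ne_g2 h2n w)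
          · simp only [hc, if_false]
            exact not_false
        have hfnotS : f w ∉ S := by
          intro hmem
          rcases trichotomy S (cl (f w)) with h | h | h
          · rw [hA0] at h; simp at h
          · exact absurd h (cl_mem_of_mem hmem)
          · exact hnotmem h
        rw [hf]
        by_cases hc : cl (w * g1 n) ∈ clProper S
        · simp only [hc, if_true]
          simp only [hf, hc, if_true] at hfnotS
          exact crossC_out2 h1n hw hfnotS
        · simp only [hc, if_false]
          simp only [hf, hc, if_false] at hfnotS
          exact crossC_out1 h1n hw hfnotS
      omega
    · by_cases hB0 : clEmpty S = ∅
      · -- every vertex of the complement is in a proper cluster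
        have hsub : ∀ w ∈ Sᶜ, cl w ∈ clProper S := by
          intro w hw
          rcases trichotomy S (cl w) with h | h | h
          · exact absurd h (cl_mem_of_not_mem (Finset.mem_compl.1 hw))
          · rw [hB0] at h; simp at h
          · exact h
        set f : Equiv.Perm (Fin (n+1)) → Equiv.Perm (Fin (n+1)) :=
          fun w => if cl (w * g1 n) ∈ clProper S then w * g2 n else w * g1 n with hf
        have hcross : Sᶜ.card ≤ (crossC S).card := by
          apply cross_of_inj_snd S Sᶜ f
          intro w hw
          have hwS : w ∉ S := Finset.mem_compl.1 hw
          have hnotmem : cl (f w) ∉ clProper S := by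
            rw [hf]
            by_cases hc : cl (w * g1 n) ∈ clProper S
            · simp only [hc, if_true]
              intro hc2
              exact not_three_distinct hk2 (hsub w hw) hc hc2
                (Ne.symm (cl_mul_g1_ne h1n w)) (Ne.symm (cl_mul_g2_ne h1n w))
                (cl_mul_g1_ne_g2 h2n w)
            · simp only [hc, if_false]
              exact not_false
          have hfS : f w ∈ S := by
            rcases trichotomy S (cl (f w)) with h | h | h
            · exact mem_clFull.1 h (mem_Hcl.2 rfl)
            · rw [hB0] at h; simp at h
            · exact absurd h hnotmem
          rw [hf]
          by_cases hc : cl (w * g1 n) ∈ clProper S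
          · simp only [hc, if_true]
            simp only [hf, hc, if_true] at hfS
            exact crossC_in2 h1n hwS hfS
          · simp only [hc, if_false]
            simp only [hf, hc, if_false] at hfS
            exact crossC_in1 h1n hwS hfS
        omega
      · -- both full and empty clusters exist
        have hcross := cross_pairs hn S (clFull S) (clEmpty S)
          (fun a ha => mem_clFull.1 ha) (fun b hb => empty_cluster_disj hb) hd
        have hA1 : 1 ≤ (clFull S).card :=
          Finset.card_pos.2 (Finset.nonempty_iff_ne_empty.2 hA0)
        have hB1 : 1 ≤ (clEmpty S).card :=
          Finset.card_pos.2 (Finset.nonempty_iff_ne_empty.2 hB0)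
        have hprod : 1 ≤ (clFull S).card * (clEmpty S).card := Nat.mul_pos hA1 hB1
        omega
  · -- k ≥ 3
    have hw3 : 3*(2*n-3) ≤ ∑ a ∈ clProper S, (winC a S).card :=
      le_trans (Nat.mul_le_mul_right _ hk3) hwin
    omega


lemma lam_star : ∀ n : ℕ, 3 ≤ n → LamP n ∧ StarP n := by
  intro n hn
  induction n, hn using Nat.le_induction with
  | base =>
    constructor
    · intro S h1 h2
      have := lam3 S h1 h2
      omega
    · intro S h1 h2
      have h2' : S.card + 2 ≤ Fintype.card (Equiv.Perm (Fin 3)) := by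
        rw [cardV]; exact h2
      have := star3 S h1 h2'
      omega
  | succ n hn ih =>
    exact ⟨fun S h1 h2 => lam_step hn ih.1 S h1 h2,
      fun S h1 h2 => star_step hn ih.1 ih.2 S h1 h2⟩

end StepLam


theorem BS_deleteEdges_isolated_vertex (n : ℕ) (hn : 3 ≤ n)
    (F : Set (Sym2 (Equiv.Perm (Fin n)))) (hF : F ⊆ (BS n).edgeSet)
    (hcard : F.ncard ≤ 4 * n - 9) (hdisc : ¬ ((BS n).deleteEdges F).Connected) :
    Nat.card ((BS n).deleteEdges F).ConnectedComponent = 2 ∧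
    ∃ C : ((BS n).deleteEdges F).ConnectedComponent, C.supp.ncard = 1 := by

  classical
  set G' := (BS n).deleteEdges F with hG'
  have hfact : 2 * n ≤ n.factorial := fact_ge2n n hn
  have hcardV : Fintype.card (Equiv.Perm (Fin n)) = n.factorial := cardV n
  -- disconnected gives two non-reachable vertices
  have hprec : ¬ G'.Preconnected := by
    intro h
    exact hdisc ((SimpleGraph.connected_iff G').2 ⟨h, ⟨1⟩⟩)
  rw [SimpleGraph.Preconnected] at hprec
  push_neg at hprec
  obtain ⟨x, y, hxy⟩ := hprec
  set Cx := G'.connectedComponentMk x with hCx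
  set Cy := G'.connectedComponentMk y with hCy
  have hCne : Cx ≠ Cy := fun h => hxy (SimpleGraph.ConnectedComponent.eq.1 h)
  -- the finset of a component
  let TF : G'.ConnectedComponent → Finset (Equiv.Perm (Fin n)) :=
    fun C => (Set.toFinite C.supp).toFinset
  have hTF_mem : ∀ (C : G'.ConnectedComponent) (v : Equiv.Perm (Fin n)),
      v ∈ TF C ↔ G'.connectedComponentMk v = C := by
    intro C v
    rw [Set.Finite.mem_toFinset, SimpleGraph.ConnectedComponent.mem_supp_iff]
  have hTF_card : ∀ C : G'.ConnectedComponent, (TF C).card = C.supp.ncard := by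
    intro C
    rw [Set.ncard_eq_toFinset_card C.supp (Set.toFinite C.supp)]
  have hTF_ne : ∀ C : G'.ConnectedComponent, (TF C).Nonempty := by
    intro C
    obtain ⟨v, rfl⟩ := C.exists_rep
    exact ⟨v, (hTF_mem _ v).2 rfl⟩
  -- all cut edges of a component's support lie in F
  have hcut : ∀ (C : G'.ConnectedComponent), ∀ p ∈ cutP n (TF C), s(p.1, p.2) ∈ F := by
    intro C p hp
    rw [mem_cutP] at hp
    obtain ⟨hadj, h1, h2⟩ := hp
    by_contra hpF
    have hadj' : G'.Adj p.1 p.2 := by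
      rw [hG', SimpleGraph.deleteEdges_adj]
      exact ⟨hadj, hpF⟩
    apply h2
    rw [hTF_mem]
    rw [hTF_mem] at h1
    rw [← h1]
    exact (SimpleGraph.ConnectedComponent.sound hadj'.reachable).symm
  -- injectivity of the pair-to-edge map on a cut
  have hinj : ∀ S : Finset (Equiv.Perm (Fin n)), Set.InjOn
      (fun p : Equiv.Perm (Fin n) × Equiv.Perm (Fin n) => s(p.1, p.2)) ↑(cutP n S) := by
    intro S p hp q hq h
    rw [Finset.mem_coe, mem_cutP] at hp hq
    rcases Sym2.eq_iff.1 h with ⟨h1, h2⟩ | ⟨h1, h2⟩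
    · exact Prod.ext h1 h2
    · exact absurd (h1 ▸ hp.2.1) hq.2.2
  have hFfin : F.Finite := Set.toFinite F
  have hFcard : F.ncard = hFfin.toFinset.card := Set.ncard_eq_toFinset_card F hFfin
  -- cut of every component has size at most |F|
  have hbound : ∀ C : G'.ConnectedComponent, (cutP n (TF C)).card ≤ F.ncard := by
    intro C
    rw [hFcard]
    apply Finset.card_le_card_of_injOn (fun p => s(p.1, p.2))
    · intro p hp
      rw [Finset.mem_coe, Set.Finite.mem_toFinset]
      exact hcut C p hp
    · exact hinj (TF C)
  have hlam := (lam_star n hn).1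
  have hstar := (lam_star n hn).2
  -- no two components both have at least 2 vertices
  have hbig : ∀ C D : G'.ConnectedComponent, C ≠ D →
      2 ≤ C.supp.ncard → 2 ≤ D.supp.ncard → False := by
    intro C D hne h2C h2D
    have hdisj : Disjoint (TF C) (TF D) := by
      rw [Finset.disjoint_left]
      intro v hvC hvD
      rw [hTF_mem] at hvC hvD
      exact hne (hvC.symm.trans hvD)
    have hsum : (TF C).card + (TF D).card ≤ n.factorial := by
      have h := Finset.card_le_univ ((TF C) ∪ (TF D))
      rw [Finset.card_union_of_disjoint hdisj, hcardV] at h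
      exact h
    have h4 : 4*n - 8 ≤ (cutP n (TF C)).card := by
      apply hstar
      · rw [hTF_card]; exact h2C
      · have h2D' : 2 ≤ (TF D).card := by rw [hTF_card]; exact h2D
        have e1 := hTF_card C
        have e2 := hTF_card D
        rw [hTF_card]
        omega
    have h5 := hbound C
    omega
  -- no two components are both singletons
  have hsing : ∀ C D : G'.ConnectedComponent, C ≠ D →
      C.supp.ncard = 1 → D.supp.ncard = 1 → False := by
    intro C D hne h1C h1D
    obtain ⟨u, hu⟩ := Finset.card_eq_one.1 ((hTF_card C).trans h1C)
    obtain ⟨v, hv⟩ := Finset.card_eq_one.1 ((hTF_card D).trans h1D)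
    have huv : u ≠ v := by
      intro h
      apply hne
      have h1 : u ∈ TF C := by rw [hu]; exact Finset.mem_singleton_self u
      have h2 : v ∈ TF D := by rw [hv]; exact Finset.mem_singleton_self v
      rw [hTF_mem] at h1 h2
      rw [← h1, ← h2, h]
    have hne_univ : ∀ w : Equiv.Perm (Fin n), ({w} : Finset (Equiv.Perm (Fin n))) ≠ Finset.univ := by
      intro w h
      have := congrArg Finset.card h
      rw [Finset.card_singleton, Finset.card_univ, hcardV] at this
      omega
    have hcu : 2*n - 3 ≤ (cutP n {u}).card := hlam {u} ⟨u, Finset.mem_singleton_self u⟩ (hne_univ u)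
    have hcv : 2*n - 3 ≤ (cutP n {v}).card := hlam {v} ⟨v, Finset.mem_singleton_self v⟩ (hne_univ v)
    set Eu := (cutP n {u}).image (fun p => s(p.1, p.2)) with hEu
    set Ev := (cutP n {v}).image (fun p => s(p.1, p.2)) with hEv
    have hEuc : Eu.card = (cutP n {u}).card := Finset.card_image_of_injOn (hinj {u})
    have hEvc : Ev.card = (cutP n {v}).card := Finset.card_image_of_injOn (hinj {v})
    have hEuF : Eu ⊆ hFfin.toFinset := by
      intro e he
      rw [hEu, Finset.mem_image] at he
      obtain ⟨p, hp, rfl⟩ := he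
      rw [Set.Finite.mem_toFinset]
      apply hcut C
      rw [← hu] at hp
      exact hp
    have hEvF : Ev ⊆ hFfin.toFinset := by
      intro e he
      rw [hEv, Finset.mem_image] at he
      obtain ⟨p, hp, rfl⟩ := he
      rw [Set.Finite.mem_toFinset]
      apply hcut D
      rw [← hv] at hp
      exact hp
    have hint : Eu ∩ Ev ⊆ {s(u, v)} := by
      intro e he
      rw [Finset.mem_inter] at he
      obtain ⟨heu, hev⟩ := he
      rw [hEu, Finset.mem_image] at heu
      rw [hEv, Finset.mem_image] at hev
      obtain ⟨p, hp, rfl⟩ := heu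
      obtain ⟨q, hq, hqe⟩ := hev
      rw [mem_cutP] at hp hq
      have hp1 : p.1 = u := Finset.mem_singleton.1 hp.2.1
      have hq1 : q.1 = v := Finset.mem_singleton.1 hq.2.1
      rcases Sym2.eq_iff.1 hqe with ⟨h1, h2⟩ | ⟨h1, h2⟩
      · exact absurd (by rw [← hp1, ← h1, hq1]) huv
      · rw [Finset.mem_singleton, hp1, ← h1, hq1]
    have hintc : (Eu ∩ Ev).card ≤ 1 := le_trans (Finset.card_le_card hint) (by simp)
    have huni := Finset.card_union_add_card_inter Eu Ev
    have huniF := Finset.card_le_card (Finset.union_subset hEuF hEvF)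
    rw [← hFcard] at huniF
    omega
  -- each component has ncard 1 or at least 2
  have hone : ∀ C : G'.ConnectedComponent, C.supp.ncard = 1 ∨ 2 ≤ C.supp.ncard := by
    intro C
    have h1 : 1 ≤ (TF C).card := Finset.card_pos.2 (hTF_ne C)
    rw [hTF_card] at h1
    omega
  -- every component is Cx or Cy
  have hall : ∀ C : G'.ConnectedComponent, C = Cx ∨ C = Cy := by
    intro C
    by_contra h
    push_neg at h
    obtain ⟨h1, h2⟩ := h
    rcases hone C with hc | hc <;> rcases hone Cx with hx1 | hx1 <;> rcases hone Cy with hy1 | hy1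
    · exact hsing C Cx h1 hc hx1
    · exact hsing C Cx h1 hc hx1
    · exact hsing C Cy h2 hc hy1
    · exact hbig Cx Cy hCne hx1 hy1
    · exact hsing Cx Cy hCne hx1 hy1
    · exact hbig C Cy h2 hc hy1
    · exact hbig C Cx h1 hc hx1
    · exact hbig C Cx h1 hc hx1
  constructor
  · rw [Nat.card_eq_two_iff]
    refine ⟨Cx, Cy, hCne, ?_⟩
    apply Set.eq_univ_of_forall
    intro C
    rcases hall C with rfl | rfl
    · exact Set.mem_insert _ _
    · exact Set.mem_insert_iff.2 (Or.inr rfl)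
  · rcases hone Cx with h | h
    · exact ⟨Cx, h⟩
    · rcases hone Cy with h' | h'
      · exact ⟨Cy, h'⟩
      · exact absurd (hbig Cx Cy hCne h h') (fun t => t)
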